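/- Fix A ∈ ℝ and define, on the open set {(q,p,τ,π) ∈ ℝ⁴ : q > 0}, the functions H(q,p,τ,π) = π − A e^{(2/3)τ} q^{−2/3} and φ(q,p,τ,π) = p + A e^{(2/3)τ} q^{−5/3}. Then the canonical Poisson bracket {H, φ} vanishes identically on this set: {H, φ}(q,p,τ,π) = 0 for all (q,p,τ,π) with q > 0. -/

import Mathlib

/-- Canonical Poisson bracket on ℝ⁴ with coordinates (q,p,τ,π):
{F,G} = ∂F/∂q ∂G/∂p − ∂F/∂p ∂G/∂q + ∂F/∂τ ∂G/∂π − ∂F/∂π ∂G/∂τ. -/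
noncomputable def pb4 (F G : ℝ → ℝ → ℝ → ℝ → ℝ) (q p τ π : ℝ) : ℝ :=
  deriv (fun x => F x p τ π) q * deriv (fun x => G q x τ π) p
  - deriv (fun x => F q x τ π) p * deriv (fun x => G x p τ π) q
  + deriv (fun x => F q p x π) τ * deriv (fun x => G q p τ x) π
  - deriv (fun x => F q p τ x) π * deriv (fun x => G q p x π) τ

/-- The ideal gas constraints H = π − A e^{(2/3)τ} q^{−2/3} and
φ = p + A e^{(2/3)τ} q^{−5/3} are first-class: {H,φ} = 0 for q > 0. -/
theorem stmt_6 (A : ℝ) (H φ : ℝ → ℝ → ℝ → ℝ → ℝ)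
    (hH : ∀ q p τ π, H q p τ π = π - A * Real.exp ((2/3) * τ) * q ^ (-(2:ℝ)/3))
    (hφ : ∀ q p τ π, φ q p τ π = p + A * Real.exp ((2/3) * τ) * q ^ (-(5:ℝ)/3)) :
    ∀ q p τ π : ℝ, 0 < q → pb4 H φ q p τ π = 0 := by
  intro q p τ π hq0
  have hq : q ≠ 0 := ne_of_gt hq0
  unfold pb4
  simp only [hH, hφ]
  -- derivatives in q
  have dHq : deriv (fun x => π - A * Real.exp ((2/3) * τ) * x ^ (-(2:ℝ)/3)) q
      = -(A * Real.exp ((2/3) * τ) * ((-(2:ℝ)/3) * q ^ ((-(2:ℝ)/3) - 1))) := by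
    have h1 : HasDerivAt (fun x : ℝ => x ^ (-(2:ℝ)/3)) ((-(2:ℝ)/3) * q ^ ((-(2:ℝ)/3) - 1)) q :=
      Real.hasDerivAt_rpow_const (Or.inl hq)
    exact ((h1.const_mul (A * Real.exp ((2/3) * τ))).const_sub π).deriv
  have dφq : deriv (fun x => p + A * Real.exp ((2/3) * τ) * x ^ (-(5:ℝ)/3)) q
      = A * Real.exp ((2/3) * τ) * ((-(5:ℝ)/3) * q ^ ((-(5:ℝ)/3) - 1)) := by
    have h1 : HasDerivAt (fun x : ℝ => x ^ (-(5:ℝ)/3)) ((-(5:ℝ)/3) * q ^ ((-(5:ℝ)/3) - 1)) q :=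
      Real.hasDerivAt_rpow_const (Or.inl hq)
    exact ((h1.const_mul (A * Real.exp ((2/3) * τ))).const_add p).deriv
  -- derivatives in p
  have dHp : deriv (fun x : ℝ => π - A * Real.exp ((2/3) * τ) * q ^ (-(2:ℝ)/3)) p = 0 :=
    deriv_const _ _
  have dφp : deriv (fun x : ℝ => x + A * Real.exp ((2/3) * τ) * q ^ (-(5:ℝ)/3)) p = 1 :=
    ((hasDerivAt_id p).add_const _).deriv
  -- derivatives in τ
  have dHτ : deriv (fun x : ℝ => π - A * Real.exp ((2/3) * x) * q ^ (-(2:ℝ)/3)) τ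
      = -(Real.exp ((2/3) * τ) * (2/3) * A * q ^ (-(2:ℝ)/3)) := by
    have h1 : HasDerivAt (fun x : ℝ => Real.exp ((2/3) * x)) (Real.exp ((2/3) * τ) * (2/3)) τ :=
      (Real.hasDerivAt_exp _).comp τ (by simpa using (hasDerivAt_id τ).const_mul (2/3 : ℝ))
    have h2 : HasDerivAt (fun x : ℝ => A * Real.exp ((2/3) * x) * q ^ (-(2:ℝ)/3))
        (Real.exp ((2/3) * τ) * (2/3) * A * q ^ (-(2:ℝ)/3)) τ := by
      have := (h1.const_mul A).mul_const (q ^ (-(2:ℝ)/3))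
      exact this.congr_deriv (by ring)
    exact (h2.const_sub π).deriv
  have dφτ : deriv (fun x : ℝ => p + A * Real.exp ((2/3) * x) * q ^ (-(5:ℝ)/3)) τ
      = Real.exp ((2/3) * τ) * (2/3) * A * q ^ (-(5:ℝ)/3) := by
    have h1 : HasDerivAt (fun x : ℝ => Real.exp ((2/3) * x)) (Real.exp ((2/3) * τ) * (2/3)) τ :=
      (Real.hasDerivAt_exp _).comp τ (by simpa using (hasDerivAt_id τ).const_mul (2/3 : ℝ))
    have h2 : HasDerivAt (fun x : ℝ => A * Real.exp ((2/3) * x) * q ^ (-(5:ℝ)/3))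
        (Real.exp ((2/3) * τ) * (2/3) * A * q ^ (-(5:ℝ)/3)) τ := by
      have := (h1.const_mul A).mul_const (q ^ (-(5:ℝ)/3))
      exact this.congr_deriv (by ring)
    exact (h2.const_add p).deriv
  -- derivatives in π
  have dHπ : deriv (fun x : ℝ => x - A * Real.exp ((2/3) * τ) * q ^ (-(2:ℝ)/3)) π = 1 :=
    ((hasDerivAt_id π).sub_const _).deriv
  have dφπ : deriv (fun x : ℝ => p + A * Real.exp ((2/3) * τ) * q ^ (-(5:ℝ)/3)) π = 0 :=
    deriv_const _ _
  rw [dHq, dφq, dHp, dφp, dHτ, dφτ, dHπ, dφπ]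
  have e1 : (-(2:ℝ)/3) - 1 = (-(5:ℝ)/3) := by norm_num
  rw [e1]
  ring
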